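/- Let w = e_k⋯e_1 be a primitive cycle in a directed graph G and λ ∈ 𝕋, and let S_{w,λ} be the cycle-type atomic CK family on H_w = ℂ^k ⊕ K_w with cycle basis ξ_1,…,ξ_k. Then the WOT-limit of (λ̄ S_w)^n as n → ∞ is the rank-one projection ξ_1 ξ_1*, and consequently the generated free semigroupoid algebra contains all matrix units ξ_j ξ_i* for 1 ≤ i, j ≤ k, i.e., contains B(ℂ^k) ⊕ 0. -/

import Mathlib

structure DirectedGraph where
  V : Type
  E : Type
  src : E → V
  rng : E → V

namespace DirectedGraph

/-- Two edges are composable (as in `e₂ e₁`, `e₂` after `e₁`) when `s(e₂) = r(e₁)`. -/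
def Composable (G : DirectedGraph) (a b : G.E) : Prop := G.src a = G.rng b

/-- A list `[eₙ, …, e₁]` of edges is a path when consecutive edges are composable. -/
def IsPathList (G : DirectedGraph) (μ : List G.E) : Prop := List.Chain' G.Composable μ

/-- The path `μ` has source `v` (vacuous for the empty path). -/
def SrcIs (G : DirectedGraph) (μ : List G.E) (v : G.V) : Prop :=
  ∀ e ∈ μ.getLast?, G.src e = v

/-- The path `μ`, regarded as a path with source `v`, has range `w`. -/
def RngIs (G : DirectedGraph) (v : G.V) (μ : List G.E) (w : G.V) : Prop :=
  match μ with
  | [] => v = w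
  | e :: _ => G.rng e = w

/-- `μ` is a path with source `v`. -/
def IsPathAt (G : DirectedGraph) (v : G.V) (μ : List G.E) : Prop :=
  G.IsPathList μ ∧ G.SrcIs μ v

/-- `μ` is a cycle at `v` : a path with source and range `v`. -/
def IsCycleAt (G : DirectedGraph) (v : G.V) (μ : List G.E) : Prop :=
  G.IsPathAt v μ ∧ G.RngIs v μ v

end DirectedGraph

/-- A Toeplitz–Cuntz–Krieger family for the directed graph `G` on the Hilbert space `H`:
pairwise orthogonal projections `Sv v`, partial isometries `Se e` with
`(Se e)* (Se e) = Sv (s e)`, and `∑_{e ∈ F} (Se e)(Se e)* ≤ Sv v` for finite `F ⊆ r⁻¹(v)`. -/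
structure TCKFamily (G : DirectedGraph) (H : Type) [NormedAddCommGroup H]
    [InnerProductSpace ℂ H] [CompleteSpace H] where
  Sv : G.V → H →L[ℂ] H
  Se : G.E → H →L[ℂ] H
  sv_sa : ∀ v, IsSelfAdjoint (Sv v)
  sv_idem : ∀ v, Sv v * Sv v = Sv v
  sv_orth : ∀ v w, v ≠ w → Sv v * Sv w = 0
  se_isom : ∀ e, ContinuousLinearMap.adjoint (Se e) * Se e = Sv (G.src e)
  tck_ineq : ∀ (v : G.V) (F : Finset G.E), (∀ e ∈ F, G.rng e = v) →
    ContinuousLinearMap.IsPositive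
      (Sv v - ∑ e ∈ F, Se e * ContinuousLinearMap.adjoint (Se e))

/-- The closure of a set of operators in the weak operator topology, described
via the basic WOT neighbourhoods. -/
def wotClosure {H : Type} [NormedAddCommGroup H] [InnerProductSpace ℂ H]
    (A : Set (H →L[ℂ] H)) : Set (H →L[ℂ] H) :=
  {T | ∀ (F : Finset (H × H)) (ε : ℝ), 0 < ε →
    ∃ X ∈ A, ∀ p ∈ F, ‖(@inner ℂ H _ ((T - X) p.1) p.2)‖ < ε}

/-- The index set for the orthonormal basis of the "wandering" part `K_w` of the
cycle-type representation `S_{w,λ}`: triples `(j, f, μ)` where `f ≠ e_j` is an edge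
with `s(f) = s(e_j)` and `μ` is a path with source `r(f)`. -/
def BranchIdx (G : DirectedGraph) {k : ℕ} (e : Fin k → G.E) : Type :=
  {t : Fin k × G.E × List G.E //
    G.src t.2.1 = G.src (e t.1) ∧ t.2.1 ≠ e t.1 ∧ G.IsPathAt (G.rng t.2.1) t.2.2}

section PortCast
open Fin.CommRing

lemma prim_no_shift {k : ℕ} [NeZero k] {E : Type} (e : Fin k → E)
    (hprim : ∀ p : ℕ, 0 < p → p < k → p ∣ k → ¬ ∀ j : Fin k, e (j + (p : Fin k)) = e j)
    (j : Fin k) (hj : j ≠ 0) (hshift : ∀ t : Fin k, e (t + j) = e t) : False := by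
  let Hsub : AddSubgroup (Fin k) :=
    { carrier := {c | ∀ t, e (t + c) = e t}
      zero_mem' := by intro t; simp
      add_mem' := by
        intro a b ha hb t
        rw [← add_assoc, hb (t + a), ha t]
      neg_mem' := by
        intro a ha t
        have := ha (t + -a)
        simpa using this.symm }
  have hjv : (j : ℕ) ≠ 0 := by
    intro h; exact hj (Fin.ext (by simpa using h))
  set d := Nat.gcd (j : ℕ) k with hd
  have hd0 : 0 < d := Nat.gcd_pos_of_pos_left _ (Nat.pos_of_ne_zero hjv)
  have hdk : d ∣ k := Nat.gcd_dvd_right _ _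
  have hdlt : d < k :=
    lt_of_le_of_lt (Nat.le_of_dvd (Nat.pos_of_ne_zero hjv) (Nat.gcd_dvd_left _ _)) j.isLt
  have hcast : ((d : ℤ) : Fin k) = (Nat.gcdA (j : ℕ) k : Fin k) * j := by
    have hbez : (d : ℤ) = (j : ℕ) * Nat.gcdA (j : ℕ) k + k * Nat.gcdB (j : ℕ) k :=
      Nat.gcd_eq_gcd_ab _ _
    rw [hbez]
    push_cast
    rw [Fin.natCast_self]
    ring
  have hmem : (d : Fin k) ∈ Hsub := by
    have h1 : Nat.gcdA (j : ℕ) k • j ∈ Hsub := AddSubgroup.zsmul_mem Hsub (by exact hshift) _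
    have h2 : Nat.gcdA (j : ℕ) k • j = (Nat.gcdA (j : ℕ) k : Fin k) * j := zsmul_eq_mul _ _
    have : (d : Fin k) = ((d : ℤ) : Fin k) := by push_cast; ring
    rw [this, hcast, ← h2]
    exact h1
  exact hprim d hd0 hdlt hdk (fun t => hmem t)
section Aux
set_option linter.unusedSectionVars false

variable {G : DirectedGraph} {H : Type} [NormedAddCommGroup H]
    [InnerProductSpace ℂ H] [CompleteSpace H]
    {k : ℕ} [NeZero k] {e : Fin k → G.E}
    {lam : ℂ} {ξ : Fin k ⊕ BranchIdx G e → H} {S : TCKFamily G H}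

/-- The partial product applying `e i, e (i+1), …, e (i+t-1)` in order. -/
noncomputable def Qop (S : TCKFamily G H) (e : Fin k → G.E) (i t : ℕ) : H →L[ℂ] H :=
  ((((List.ofFn e).drop i).take t).reverse.map S.Se).prod

lemma Qop_zero (i : ℕ) : Qop S e i 0 = 1 := by simp [Qop]

lemma Qop_succ {i t : ℕ} (h : i + t < k) :
    Qop S e i (t + 1) = S.Se (e ⟨i + t, h⟩) * Qop S e i t := by
  unfold Qop
  rw [List.take_succ]
  have h1 : ((List.ofFn e).drop i)[t]? = some (e ⟨i + t, h⟩) := by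
    rw [List.getElem?_drop]
    have : i + t < (List.ofFn e).length := by simpa using h
    rw [List.getElem?_eq_getElem this]
    simp
  rw [h1]
  simp

lemma sv_contract (S : TCKFamily G H) (v : G.V) (x : H) : ‖S.Sv v x‖ ≤ ‖x‖ := by
  have h1 : (@inner ℂ H _ (S.Sv v x) (S.Sv v x)) = @inner ℂ H _ x (S.Sv v x) := by
    have := (S.sv_sa v)
    rw [IsSelfAdjoint] at this
    calc (@inner ℂ H _ (S.Sv v x) (S.Sv v x))
        = @inner ℂ H _ x ((ContinuousLinearMap.adjoint (S.Sv v)) (S.Sv v x)) := by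
          rw [ContinuousLinearMap.adjoint_inner_right]
      _ = @inner ℂ H _ x ((S.Sv v * S.Sv v) x) := by
          rw [show ContinuousLinearMap.adjoint (S.Sv v) = S.Sv v from this]; rfl
      _ = @inner ℂ H _ x (S.Sv v x) := by rw [S.sv_idem v]
  have h2 : ‖S.Sv v x‖ ^ 2 ≤ ‖x‖ * ‖S.Sv v x‖ := by
    rw [← @inner_self_eq_norm_sq ℂ, h1]
    calc RCLike.re (@inner ℂ H _ x (S.Sv v x)) ≤ ‖(@inner ℂ H _ x (S.Sv v x))‖ :=
          RCLike.re_le_norm _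
      _ ≤ ‖x‖ * ‖S.Sv v x‖ := norm_inner_le_norm _ _
  nlinarith [norm_nonneg (S.Sv v x), norm_nonneg x]

lemma se_contract (S : TCKFamily G H) (g : G.E) (x : H) : ‖S.Se g x‖ ≤ ‖x‖ := by
  have h1 : (@inner ℂ H _ (S.Se g x) (S.Se g x)) = @inner ℂ H _ x (S.Sv (G.src g) x) := by
    calc (@inner ℂ H _ (S.Se g x) (S.Se g x))
        = @inner ℂ H _ x ((ContinuousLinearMap.adjoint (S.Se g)) (S.Se g x)) := by
          rw [ContinuousLinearMap.adjoint_inner_right]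
      _ = @inner ℂ H _ x ((ContinuousLinearMap.adjoint (S.Se g) * S.Se g) x) := rfl
      _ = @inner ℂ H _ x (S.Sv (G.src g) x) := by rw [S.se_isom g]
  have h2 : ‖S.Se g x‖ ^ 2 ≤ ‖x‖ ^ 2 := by
    rw [← @inner_self_eq_norm_sq ℂ, h1]
    calc RCLike.re (@inner ℂ H _ x (S.Sv (G.src g) x))
        ≤ ‖(@inner ℂ H _ x (S.Sv (G.src g) x))‖ := RCLike.re_le_norm _
      _ ≤ ‖x‖ * ‖S.Sv (G.src g) x‖ := norm_inner_le_norm _ _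
      _ ≤ ‖x‖ * ‖x‖ := by
          exact mul_le_mul_of_nonneg_left (sv_contract S (G.src g) x) (norm_nonneg x)
      _ = ‖x‖ ^ 2 := (sq ‖x‖).symm
  nlinarith [norm_nonneg (S.Se g x), norm_nonneg x]

lemma prod_se_contract (S : TCKFamily G H) (l : List G.E) (x : H) :
    ‖(l.map S.Se).prod x‖ ≤ ‖x‖ := by
  induction l generalizing x with
  | nil => simp
  | cons a l ih =>
    rw [List.map_cons, List.prod_cons]
    calc ‖S.Se a ((l.map S.Se).prod x)‖ ≤ ‖(l.map S.Se).prod x‖ := se_contract S a _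
      _ ≤ ‖x‖ := ih x

end Aux
section Main
set_option linter.unusedSectionVars false

variable {G : DirectedGraph} {H : Type} [NormedAddCommGroup H]
    [InnerProductSpace ℂ H] [CompleteSpace H]
    {k : ℕ} [NeZero k] {e : Fin k → G.E}
    {lam : ℂ} {ξ : Fin k ⊕ BranchIdx G e → H} {S : TCKFamily G H}

/-- The range vertex of (the path of) a branch index. -/
def rngOf (G : DirectedGraph) {k : ℕ} {e : Fin k → G.E} (q : BranchIdx G e) : G.V :=
  match q.1.2.2 with
  | [] => G.rng q.1.2.1
  | g :: _ => G.rng g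

lemma rngIs_iff (q : BranchIdx G e) (v : G.V) :
    G.RngIs (G.rng q.1.2.1) q.1.2.2 v ↔ rngOf G q = v := by
  rcases q with ⟨⟨j, f, μ⟩, hq⟩
  cases μ with
  | nil => simp [DirectedGraph.RngIs, rngOf]
  | cons g μ => simp [DirectedGraph.RngIs, rngOf]

variable
  (hSe_cycle : ∀ j : Fin k, S.Se (e j) (ξ (Sum.inl j)) =
      (if (j : ℕ) + 1 = k then lam else 1) • ξ (Sum.inl (j + 1)))
  (hSe_branch : ∀ (g : G.E) (j : Fin k), G.src g = G.src (e j) → g ≠ e j →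
      ∀ q : BranchIdx G e, q.1 = (j, g, ([] : List G.E)) →
        S.Se g (ξ (Sum.inl j)) = ξ (Sum.inr q))
  (hSe_cycle_zero : ∀ (g : G.E) (j : Fin k), G.src g ≠ G.src (e j) →
      S.Se g (ξ (Sum.inl j)) = 0)
  (hSe_ext : ∀ (g : G.E) (q q' : BranchIdx G e),
      G.RngIs (G.rng q.1.2.1) q.1.2.2 (G.src g) →
      q'.1 = (q.1.1, q.1.2.1, g :: q.1.2.2) →
        S.Se g (ξ (Sum.inr q)) = ξ (Sum.inr q'))
  (hSe_branch_zero : ∀ (g : G.E) (q : BranchIdx G e),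
      ¬ G.RngIs (G.rng q.1.2.1) q.1.2.2 (G.src g) → S.Se g (ξ (Sum.inr q)) = 0)

include hSe_ext hSe_branch_zero in
/-- Single step on a branch vector: the result is `0` or a branch vector with
one more edge in its path. -/
lemma step_branch (g : G.E) (q : BranchIdx G e) :
    S.Se g (ξ (Sum.inr q)) = 0 ∨ ∃ q' : BranchIdx G e,
      S.Se g (ξ (Sum.inr q)) = ξ (Sum.inr q') ∧
      q'.1.2.2.length = q.1.2.2.length + 1 := by
  by_cases h : rngOf G q = G.src g
  · right
    rcases q with ⟨⟨j, f, μ⟩, hsrc, hne, hpl, hsi⟩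
    have hpl' : G.IsPathList (g :: μ) := by
      rw [DirectedGraph.IsPathList]; show List.IsChain _ _; rw [List.isChain_cons]
      refine ⟨?_, hpl⟩
      intro b hb
      cases μ with
      | nil => simp at hb
      | cons a μ' =>
        simp at hb
        subst hb
        exact (h : rngOf G _ = _).symm
    have hsi' : G.SrcIs (g :: μ) (G.rng f) := by
      intro x hx
      cases μ with
      | nil =>
        simp [List.getLast?] at hx
        subst hx
        exact h.symm
      | cons a μ' =>
        rw [List.getLast?_cons_cons] at hx
        exact hsi x hx
    refine ⟨⟨(j, f, g :: μ), hsrc, hne, hpl', hsi'⟩, ?_, rfl⟩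
    exact hSe_ext g _ _ ((rngIs_iff _ _).mpr h) rfl
  · left
    exact hSe_branch_zero g q (fun hr => h ((rngIs_iff _ _).mp hr))
include hSe_cycle hSe_branch hSe_cycle_zero in
/-- Single step on a cycle vector. -/
lemma step_cycle (g : G.E) (m : Fin k) :
    S.Se g (ξ (Sum.inl m)) = 0 ∨
    (g = e m ∧ S.Se g (ξ (Sum.inl m)) =
      (if (m : ℕ) + 1 = k then lam else 1) • ξ (Sum.inl (m + 1))) ∨
    (∃ q' : BranchIdx G e, S.Se g (ξ (Sum.inl m)) = ξ (Sum.inr q') ∧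
      q'.1.2.2.length = 0) := by
  by_cases hsrc : G.src g = G.src (e m)
  · by_cases heq : g = e m
    · subst heq
      exact Or.inr (Or.inl ⟨rfl, hSe_cycle m⟩)
    · refine Or.inr (Or.inr ⟨⟨(m, g, []), hsrc, heq, ?_, ?_⟩, ?_, rfl⟩)
      · exact List.isChain_nil
      · intro x hx; simp [List.getLast?] at hx
      · exact hSe_branch g m hsrc heq _ rfl
  · exact Or.inl (hSe_cycle_zero g m hsrc)

include hSe_ext hSe_branch_zero in
/-- Run along part of the cycle, starting from a branch vector. -/
lemma run_branch : ∀ (t i : ℕ), i + t ≤ k → ∀ q : BranchIdx G e,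
    Qop S e i t (ξ (Sum.inr q)) = 0 ∨ ∃ q' : BranchIdx G e,
      Qop S e i t (ξ (Sum.inr q)) = ξ (Sum.inr q') ∧
      q'.1.2.2.length = q.1.2.2.length + t := by
  intro t
  induction t with
  | zero => intro i _ q; right; exact ⟨q, by simp [Qop_zero], rfl⟩
  | succ t ih =>
    intro i h q
    have hlt : i + t < k := by omega
    rw [Qop_succ hlt]
    rcases ih i (le_of_lt hlt) q with h0 | ⟨q', hq', hlen⟩
    · left
      simp [ContinuousLinearMap.mul_apply, h0]
    · rw [ContinuousLinearMap.mul_apply, hq']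
      rcases step_branch hSe_ext hSe_branch_zero (e ⟨i + t, hlt⟩) q' with h0 | ⟨q'', hq'', hlen'⟩
      · exact Or.inl h0
      · exact Or.inr ⟨q'', hq'', by omega⟩
include hSe_cycle in
/-- Run along part of the cycle, starting at the aligned cycle vector. -/
lemma run_aligned : ∀ (t i : ℕ), i + t ≤ k →
    Qop S e i t (ξ (Sum.inl ((i : ℕ) : Fin k))) =
      (if i + t = k ∧ 0 < t then lam else 1) • ξ (Sum.inl ((i + t : ℕ) : Fin k)) := by
  intro t
  induction t with
  | zero =>
    intro i h
    simp [Qop_zero]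
  | succ t ih =>
    intro i h
    have hlt : i + t < k := by omega
    rw [Qop_succ hlt, ContinuousLinearMap.mul_apply, ih i (le_of_lt hlt)]
    have hif : (if i + t = k ∧ 0 < t then lam else 1) = 1 := by
      have : ¬(i + t = k ∧ 0 < t) := by omega
      simp [this]
    rw [hif, one_smul]
    have hm : ((i + t : ℕ) : Fin k) = (⟨i + t, hlt⟩ : Fin k) := by
      ext
      exact Fin.val_cast_of_lt hlt
    rw [hm, hSe_cycle ⟨i + t, hlt⟩]
    have hval : ((⟨i + t, hlt⟩ : Fin k) : ℕ) = i + t := rfl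
    have hfin : (⟨i + t, hlt⟩ : Fin k) + 1 = ((i + (t + 1) : ℕ) : Fin k) := by
      rw [← hm]
      push_cast
      ring
    rw [hval, hfin]
    by_cases hc : i + (t + 1) = k
    · have h1 : i + t + 1 = k := by omega
      simp [hc, h1]
    · have h1 : ¬(i + t + 1 = k) := by omega
      simp [hc, h1]
variable (hlam : ‖lam‖ = 1)

include hlam hSe_cycle hSe_branch hSe_cycle_zero hSe_ext hSe_branch_zero in
/-- Run along part of the cycle, starting at an arbitrary cycle vector. -/
lemma run_cycle_start : ∀ (t i : ℕ), i + t ≤ k → ∀ j : Fin k,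
    Qop S e i t (ξ (Sum.inl j)) = 0 ∨
    ((∀ s : ℕ, s < t → e ((i + s : ℕ) : Fin k) = e (j + (s : ℕ))) ∧
      ∃ c : ℂ, ‖c‖ = 1 ∧ Qop S e i t (ξ (Sum.inl j)) = c • ξ (Sum.inl (j + (t : ℕ)))) ∨
    (∃ (c : ℂ) (q' : BranchIdx G e), ‖c‖ = 1 ∧
      Qop S e i t (ξ (Sum.inl j)) = c • ξ (Sum.inr q')) := by
  intro t
  induction t with
  | zero =>
    intro i _ j
    right; left
    exact ⟨fun s hs => absurd hs (by omega), 1, by simp [Qop_zero]⟩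
  | succ t ih =>
    intro i h j
    have hlt : i + t < k := by omega
    rw [Qop_succ hlt, ContinuousLinearMap.mul_apply]
    rcases ih i (le_of_lt hlt) j with h0 | ⟨hmatch, c, hc, hval⟩ | ⟨c, q', hc, hval⟩
    · left; simp [h0]
    · rw [hval, map_smul]
      rcases step_cycle hSe_cycle hSe_branch hSe_cycle_zero (e ⟨i + t, hlt⟩) (j + (t : ℕ))
        with h0 | ⟨heq, hv⟩ | ⟨q', hv, _⟩
      · left; rw [h0, smul_zero]
      · right; left
        constructor
        · intro s hs
          rcases Nat.lt_or_ge s t with hst | hst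
          · exact hmatch s hst
          · have hst' : s = t := by omega
            subst hst'
            have : ((i + s : ℕ) : Fin k) = (⟨i + s, hlt⟩ : Fin k) := by
              ext; exact Fin.val_cast_of_lt hlt
            rw [this, heq]
        · refine ⟨c * (if ((j + (t : ℕ) : Fin k) : ℕ) + 1 = k then lam else 1), ?_, ?_⟩
          · rw [norm_mul, hc, one_mul]
            split
            · exact hlam
            · exact norm_one
          · rw [hv, smul_smul]
            congr 2
            push_cast
            ring
      · right; right
        exact ⟨c, q', hc, by rw [hv]⟩
    · rw [hval, map_smul]
      rcases step_branch hSe_ext hSe_branch_zero (e ⟨i + t, hlt⟩) q' with h0 | ⟨q'', hv, _⟩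
      · left; rw [h0, smul_zero]
      · right; right
        exact ⟨c, q'', hc, by rw [hv]⟩
/-- The operator `λ̄ S_w`. -/
noncomputable def Tw (S : TCKFamily G H) (e : Fin k → G.E) (lam : ℂ) : H →L[ℂ] H :=
  (starRingEnd ℂ) lam • ((List.ofFn e).reverse.map S.Se).prod

lemma Tw_eq : Tw S e lam = (starRingEnd ℂ) lam • Qop S e 0 k := by
  unfold Tw Qop
  rw [List.drop_zero, List.take_of_length_le (by simp)]

include hlam in
lemma conj_lam_mul : (starRingEnd ℂ) lam * lam = 1 := by
  rw [RCLike.conj_mul, hlam]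
  norm_num

include hlam hSe_cycle in
lemma Tw_fix : Tw S e lam (ξ (Sum.inl 0)) = ξ (Sum.inl 0) := by
  have hk : 0 < k := Nat.pos_of_ne_zero (NeZero.ne k)
  have h := run_aligned hSe_cycle k 0 (by omega)
  rw [Tw_eq, ContinuousLinearMap.smul_apply]
  have h0 : ((0 : ℕ) : Fin k) = 0 := by norm_num
  rw [h0] at h
  rw [h]
  have hcond : (0 + k = k ∧ 0 < k) := ⟨by omega, hk⟩
  rw [if_pos hcond, smul_smul, conj_lam_mul hlam]
  have : ((0 + k : ℕ) : Fin k) = 0 := by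
    simp [Fin.natCast_self]
  rw [this, one_smul]

/-- The "rank" of a basis vector: `0` on the cycle, path length plus one on branches. -/
def rankB (G : DirectedGraph) {k : ℕ} (e : Fin k → G.E) :
    Fin k ⊕ BranchIdx G e → ℕ :=
  Sum.elim (fun _ => 0) (fun q => q.1.2.2.length + 1)

variable (hprim : ∀ p : ℕ, 0 < p → p < k → p ∣ k →
      ¬ ∀ j : Fin k, e (j + (p : Fin k)) = e j)

include hlam hSe_cycle hSe_branch hSe_cycle_zero hSe_ext hSe_branch_zero hprim in
/-- One application of `Tw` to a non-`ξ₀` basis vector. -/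
lemma step_Tw (b : Fin k ⊕ BranchIdx G e) (hb : b ≠ Sum.inl 0) :
    Tw S e lam (ξ b) = 0 ∨ ∃ (c : ℂ) (q' : BranchIdx G e), ‖c‖ = 1 ∧
      Tw S e lam (ξ b) = c • ξ (Sum.inr q') ∧ rankB G e b < rankB G e (Sum.inr q') := by
  have hk : 0 < k := Nat.pos_of_ne_zero (NeZero.ne k)
  have hnorm : ‖(starRingEnd ℂ) lam‖ = 1 := by
    rw [RCLike.norm_conj, hlam]
  rw [Tw_eq, ContinuousLinearMap.smul_apply]
  cases b with
  | inl j =>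
    have hj : j ≠ 0 := fun h => hb (by rw [h])
    rcases run_cycle_start hSe_cycle hSe_branch hSe_cycle_zero hSe_ext hSe_branch_zero hlam
        k 0 (by omega) j with h0 | ⟨hmatch, _, _, _⟩ | ⟨c, q', hc, hval⟩
    · left; rw [h0, smul_zero]
    · exfalso
      refine prim_no_shift e hprim j hj ?_
      intro t
      have ht := hmatch (t : ℕ) t.isLt
      simp only [zero_add, Fin.cast_val_eq_self] at ht
      rw [add_comm]
      exact ht.symm
    · right
      refine ⟨(starRingEnd ℂ) lam * c, q', by rw [norm_mul, hnorm, hc, one_mul], ?_, ?_⟩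
      · rw [hval, smul_smul]
      · simp [rankB]
  | inr q =>
    rcases run_branch hSe_ext hSe_branch_zero k 0 (by omega) q with h0 | ⟨q', hval, hlen⟩
    · left; rw [h0, smul_zero]
    · right
      refine ⟨(starRingEnd ℂ) lam, q', hnorm, by rw [hval], ?_⟩
      simp only [rankB, Sum.elim_inr]
      omega

include hlam hSe_cycle hSe_branch hSe_cycle_zero hSe_ext hSe_branch_zero hprim in
/-- Iterated applications of `Tw` to a non-`ξ₀` basis vector. -/
lemma iter_Tw (b : Fin k ⊕ BranchIdx G e) (hb : b ≠ Sum.inl 0) : ∀ m : ℕ,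
    (Tw S e lam ^ (m + 1)) (ξ b) = 0 ∨ ∃ (c : ℂ) (q' : BranchIdx G e), ‖c‖ = 1 ∧
      (Tw S e lam ^ (m + 1)) (ξ b) = c • ξ (Sum.inr q') ∧
      m + rankB G e b < rankB G e (Sum.inr q') := by
  intro m
  induction m with
  | zero =>
    rw [pow_one]
    simpa using step_Tw hSe_cycle hSe_branch hSe_cycle_zero hSe_ext hSe_branch_zero hlam hprim b hb
  | succ m ih =>
    rw [pow_succ', ContinuousLinearMap.mul_apply]
    rcases ih with h0 | ⟨c, q', hc, hval, hrank⟩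
    · left; rw [h0, map_zero]
    · rw [hval, map_smul]
      rcases step_Tw hSe_cycle hSe_branch hSe_cycle_zero hSe_ext hSe_branch_zero hlam hprim
          (Sum.inr q') (by simp) with h0 | ⟨c', q'', hc', hval', hrank'⟩
      · left; rw [h0, smul_zero]
      · right
        refine ⟨c * c', q'', by rw [norm_mul, hc, hc', one_mul], by rw [hval', smul_smul], ?_⟩
        omega
include hlam in
lemma Tw_contract (z : H) : ‖Tw S e lam z‖ ≤ ‖z‖ := by
  rw [Tw, ContinuousLinearMap.smul_apply, norm_smul, RCLike.norm_conj, hlam, one_mul]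
  exact prod_se_contract S _ z

include hlam in
lemma Tw_pow_contract (m : ℕ) (z : H) : ‖(Tw S e lam ^ m) z‖ ≤ ‖z‖ := by
  induction m with
  | zero => simp
  | succ m ih =>
    rw [pow_succ', ContinuousLinearMap.mul_apply]
    exact le_trans (Tw_contract hlam _) ih

include hlam hSe_cycle in
lemma Tw_fix_pow (m : ℕ) : (Tw S e lam ^ m) (ξ (Sum.inl 0)) = ξ (Sum.inl 0) := by
  induction m with
  | zero => simp
  | succ m ih =>
    rw [pow_succ, ContinuousLinearMap.mul_apply, Tw_fix hSe_cycle hlam, ih]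

include hlam hSe_cycle hSe_branch hSe_cycle_zero hSe_ext hSe_branch_zero hprim in
lemma tendsto_basis_zero (hON : Orthonormal ℂ ξ) (b : Fin k ⊕ BranchIdx G e)
    (hb : b ≠ Sum.inl 0) (y : H) :
    Filter.Tendsto (fun m => @inner ℂ H _ y ((Tw S e lam ^ m) (ξ b)))
      Filter.atTop (nhds 0) := by
  rw [Metric.tendsto_atTop]
  intro ε hε
  have hsum : Summable (fun b' => ‖@inner ℂ H _ (ξ b') y‖ ^ 2) :=
    hON.inner_products_summable (x := y)
  have hfin : {b' | ¬ ‖@inner ℂ H _ (ξ b') y‖ ^ 2 < ε ^ 2}.Finite := by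
    have h1 := hsum.tendsto_cofinite_zero
    have h2 := h1.eventually (gt_mem_nhds (show (0:ℝ) < ε ^ 2 by positivity))
    exact Filter.eventually_cofinite.mp h2
  set F := hfin.toFinset with hF
  set N := F.sup (rankB G e) + 1 with hN
  refine ⟨N, fun m hm => ?_⟩
  obtain ⟨m', rfl⟩ : ∃ m', m = m' + 1 := ⟨m - 1, by omega⟩
  rw [dist_zero_right]
  rcases iter_Tw hSe_cycle hSe_branch hSe_cycle_zero hSe_ext hSe_branch_zero hlam hprim b hb m'
    with h0 | ⟨c, q', hc, hval, hrank⟩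
  · rw [h0, inner_zero_right, norm_zero]; exact hε
  · rw [hval, inner_smul_right, norm_mul, hc, one_mul]
    have hq'F : Sum.inr q' ∉ F := by
      intro hmem
      have h3 : rankB G e (Sum.inr q') ≤ F.sup (rankB G e) := Finset.le_sup hmem
      omega
    have h4 : ‖@inner ℂ H _ (ξ (Sum.inr q')) y‖ ^ 2 < ε ^ 2 := by
      by_contra h5
      exact hq'F (hF ▸ hfin.mem_toFinset.mpr h5)
    rw [← norm_inner_symm]
    nlinarith [norm_nonneg (@inner ℂ H _ (ξ (Sum.inr q')) y)]
include hlam hSe_cycle hSe_branch hSe_cycle_zero hSe_ext hSe_branch_zero hprim in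
lemma tendsto_main (hON : Orthonormal ℂ ξ)
    (htot : (Submodule.span ℂ (Set.range ξ)).topologicalClosure = ⊤) (x y : H) :
    Filter.Tendsto (fun m : ℕ => @inner ℂ H _ y ((Tw S e lam ^ m) x)) Filter.atTop
      (nhds ((@inner ℂ H _ (ξ (Sum.inl 0)) x) * (@inner ℂ H _ y (ξ (Sum.inl 0))))) := by
  have hbasis : ∀ b, Filter.Tendsto
      (fun m : ℕ => @inner ℂ H _ y ((Tw S e lam ^ m) (ξ b))) Filter.atTop
      (nhds ((@inner ℂ H _ (ξ (Sum.inl 0)) (ξ b)) *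
        (@inner ℂ H _ y (ξ (Sum.inl 0))))) := by
    intro b
    by_cases hb : b = Sum.inl 0
    · subst hb
      have h1 : (fun m : ℕ => @inner ℂ H _ y ((Tw S e lam ^ m) (ξ (Sum.inl 0)))) =
          fun _ : ℕ => @inner ℂ H _ y (ξ (Sum.inl (0 : Fin k))) := by
        funext m
        rw [Tw_fix_pow hSe_cycle hlam m]
      rw [h1]
      have h2 : @inner ℂ H _ (ξ (Sum.inl (0 : Fin k))) (ξ (Sum.inl (0 : Fin k))) = 1 := by
        rw [inner_self_eq_norm_sq_to_K, hON.1 (Sum.inl 0)]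
        norm_num
      rw [h2, one_mul]
      exact tendsto_const_nhds
    · have h2 : @inner ℂ H _ (ξ (Sum.inl (0 : Fin k))) (ξ b) = 0 :=
        hON.2 (fun h => hb h.symm)
      rw [h2, zero_mul]
      exact tendsto_basis_zero hSe_cycle hSe_branch hSe_cycle_zero hSe_ext hSe_branch_zero
        hlam hprim hON b hb y
  have hspan : ∀ x' ∈ Submodule.span ℂ (Set.range ξ), Filter.Tendsto
      (fun m : ℕ => @inner ℂ H _ y ((Tw S e lam ^ m) x')) Filter.atTop
      (nhds ((@inner ℂ H _ (ξ (Sum.inl 0)) x') * (@inner ℂ H _ y (ξ (Sum.inl 0))))) := by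
    intro x' hx'
    induction hx' using Submodule.span_induction with
    | mem z hz =>
      obtain ⟨b, rfl⟩ := hz
      exact hbasis b
    | zero => simpa using tendsto_const_nhds
    | add u v _ _ hut hvt =>
      have h := hut.add hvt
      have heq : (fun m : ℕ => @inner ℂ H _ y ((Tw S e lam ^ m) u) +
          @inner ℂ H _ y ((Tw S e lam ^ m) v)) =
          fun m : ℕ => @inner ℂ H _ y ((Tw S e lam ^ m) (u + v)) := by
        funext m
        rw [map_add, inner_add_right]
      rw [heq] at h
      have heq2 : (@inner ℂ H _ (ξ (Sum.inl 0)) (u + v)) * (@inner ℂ H _ y (ξ (Sum.inl 0))) =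
          (@inner ℂ H _ (ξ (Sum.inl 0)) u) * (@inner ℂ H _ y (ξ (Sum.inl 0))) +
          (@inner ℂ H _ (ξ (Sum.inl 0)) v) * (@inner ℂ H _ y (ξ (Sum.inl 0))) := by
        rw [inner_add_right, add_mul]
      rw [heq2]
      exact h
    | smul c u _ hut =>
      have h := hut.const_mul c
      have heq : (fun m : ℕ => c * @inner ℂ H _ y ((Tw S e lam ^ m) u)) =
          fun m : ℕ => @inner ℂ H _ y ((Tw S e lam ^ m) (c • u)) := by
        funext m
        rw [map_smul, inner_smul_right]
      rw [heq] at h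
      have heq2 : (@inner ℂ H _ (ξ (Sum.inl 0)) (c • u)) * (@inner ℂ H _ y (ξ (Sum.inl 0))) =
          c * ((@inner ℂ H _ (ξ (Sum.inl 0)) u) * (@inner ℂ H _ y (ξ (Sum.inl 0)))) := by
        rw [inner_smul_right]
        ring
      rw [heq2]
      exact h
  rw [Metric.tendsto_atTop]
  intro ε hε
  have hy1 : (0:ℝ) < ‖y‖ + 1 := by positivity
  set δ := ε / 3 / (‖y‖ + 1) with hδ
  have hδ0 : 0 < δ := by positivity
  have hdense : Dense ((Submodule.span ℂ (Set.range ξ) : Submodule ℂ H) : Set H) :=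
    Submodule.dense_iff_topologicalClosure_eq_top.mpr htot
  obtain ⟨x', hx'mem, hx'⟩ := Metric.mem_closure_iff.mp (hdense x) δ hδ0
  rw [dist_eq_norm] at hx'
  have h := hspan x' hx'mem
  rw [Metric.tendsto_atTop] at h
  obtain ⟨N, hN⟩ := h (ε/3) (by positivity)
  refine ⟨N, fun m hm => ?_⟩
  have hNm := hN m hm
  rw [dist_eq_norm] at hNm ⊢
  have h1 : ‖@inner ℂ H _ y ((Tw S e lam ^ m) x) - @inner ℂ H _ y ((Tw S e lam ^ m) x')‖
      ≤ ‖y‖ * δ := by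
    calc ‖@inner ℂ H _ y ((Tw S e lam ^ m) x) - @inner ℂ H _ y ((Tw S e lam ^ m) x')‖
        = ‖@inner ℂ H _ y ((Tw S e lam ^ m) x - (Tw S e lam ^ m) x')‖ := by
          rw [inner_sub_right]
      _ ≤ ‖y‖ * ‖(Tw S e lam ^ m) x - (Tw S e lam ^ m) x'‖ := norm_inner_le_norm _ _
      _ = ‖y‖ * ‖(Tw S e lam ^ m) (x - x')‖ := by rw [map_sub]
      _ ≤ ‖y‖ * ‖x - x'‖ := by
          exact mul_le_mul_of_nonneg_left (Tw_pow_contract hlam m _) (norm_nonneg y)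
      _ ≤ ‖y‖ * δ := by
          exact mul_le_mul_of_nonneg_left (le_of_lt hx') (norm_nonneg y)
  have h2 : ‖(@inner ℂ H _ (ξ (Sum.inl 0)) x') * (@inner ℂ H _ y (ξ (Sum.inl 0))) -
      (@inner ℂ H _ (ξ (Sum.inl 0)) x) * (@inner ℂ H _ y (ξ (Sum.inl 0)))‖ ≤ δ * ‖y‖ := by
    calc ‖(@inner ℂ H _ (ξ (Sum.inl 0)) x') * (@inner ℂ H _ y (ξ (Sum.inl 0))) -
        (@inner ℂ H _ (ξ (Sum.inl 0)) x) * (@inner ℂ H _ y (ξ (Sum.inl 0)))‖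
        = ‖(@inner ℂ H _ (ξ (Sum.inl (0 : Fin k))) (x' - x)) *
            (@inner ℂ H _ y (ξ (Sum.inl 0)))‖ := by
          rw [inner_sub_right, sub_mul]
      _ = ‖(@inner ℂ H _ (ξ (Sum.inl (0 : Fin k))) (x' - x))‖ *
            ‖(@inner ℂ H _ y (ξ (Sum.inl (0 : Fin k))))‖ := norm_mul _ _
      _ ≤ (‖ξ (Sum.inl (0 : Fin k))‖ * ‖x' - x‖) * (‖y‖ * ‖ξ (Sum.inl (0 : Fin k))‖) := by
          exact mul_le_mul (norm_inner_le_norm _ _) (norm_inner_le_norm _ _)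
            (norm_nonneg _) (by positivity)
      _ = ‖x' - x‖ * ‖y‖ := by rw [hON.1 (Sum.inl 0)]; ring
      _ ≤ δ * ‖y‖ := by
          rw [norm_sub_rev]
          exact mul_le_mul_of_nonneg_right (le_of_lt hx') (norm_nonneg y)
  have hkey : ‖@inner ℂ H _ y ((Tw S e lam ^ m) x) -
      (@inner ℂ H _ (ξ (Sum.inl 0)) x) * (@inner ℂ H _ y (ξ (Sum.inl 0)))‖ ≤
      ‖y‖ * δ + ε/3 + δ * ‖y‖ := by
    calc ‖@inner ℂ H _ y ((Tw S e lam ^ m) x) -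
        (@inner ℂ H _ (ξ (Sum.inl 0)) x) * (@inner ℂ H _ y (ξ (Sum.inl 0)))‖
        ≤ ‖@inner ℂ H _ y ((Tw S e lam ^ m) x) - @inner ℂ H _ y ((Tw S e lam ^ m) x')‖ +
          ‖@inner ℂ H _ y ((Tw S e lam ^ m) x') -
            (@inner ℂ H _ (ξ (Sum.inl 0)) x') * (@inner ℂ H _ y (ξ (Sum.inl 0)))‖ +
          ‖(@inner ℂ H _ (ξ (Sum.inl 0)) x') * (@inner ℂ H _ y (ξ (Sum.inl 0))) -
            (@inner ℂ H _ (ξ (Sum.inl 0)) x) * (@inner ℂ H _ y (ξ (Sum.inl 0)))‖ := by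
          have := dist_triangle4 (@inner ℂ H _ y ((Tw S e lam ^ m) x))
            (@inner ℂ H _ y ((Tw S e lam ^ m) x'))
            ((@inner ℂ H _ (ξ (Sum.inl 0)) x') * (@inner ℂ H _ y (ξ (Sum.inl 0))))
            ((@inner ℂ H _ (ξ (Sum.inl 0)) x) * (@inner ℂ H _ y (ξ (Sum.inl 0))))
          simpa [dist_eq_norm] using this
      _ ≤ ‖y‖ * δ + ε/3 + δ * ‖y‖ := by
          gcongr <;> first | exact h1 | exact le_of_lt hNm | exact h2
  have hfin : ‖y‖ * δ < ε / 3 := by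
    have hδ1 : δ * (‖y‖ + 1) = ε / 3 := by
      rw [hδ]; field_simp
    nlinarith [norm_nonneg y, hδ0]
  calc ‖@inner ℂ H _ y ((Tw S e lam ^ m) x) -
      (@inner ℂ H _ (ξ (Sum.inl 0)) x) * (@inner ℂ H _ y (ξ (Sum.inl 0)))‖
      ≤ ‖y‖ * δ + ε/3 + δ * ‖y‖ := hkey
    _ < ε := by
        have hcomm : δ * ‖y‖ = ‖y‖ * δ := mul_comm _ _
        linarith
include hSe_cycle in
lemma Aop_xi0 (j : Fin k) : Qop S e 0 (j : ℕ) (ξ (Sum.inl 0)) = ξ (Sum.inl j) := by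
  have h := run_aligned hSe_cycle (j : ℕ) 0 (by omega)
  have h0 : ((0 : ℕ) : Fin k) = 0 := by norm_num
  rw [h0] at h
  rw [h]
  have hc : ¬(0 + (j : ℕ) = k ∧ 0 < (j : ℕ)) := by
    have := j.isLt
    omega
  rw [if_neg hc, one_smul, zero_add, Fin.cast_val_eq_self]

include hlam hSe_cycle hSe_branch hSe_cycle_zero hSe_ext hSe_branch_zero in
lemma Bop_inner (hON : Orthonormal ℂ ξ) (i : Fin k) (b : Fin k ⊕ BranchIdx G e) :
    (starRingEnd ℂ) lam * @inner ℂ H _ (ξ (Sum.inl 0))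
        ((Qop S e (i : ℕ) (k - (i : ℕ))) (ξ b)) =
      @inner ℂ H _ (ξ (Sum.inl i)) (ξ b) := by
  have hik : (i : ℕ) < k := i.isLt
  have hsum : (i : ℕ) + (k - (i : ℕ)) = k := by omega
  cases b with
  | inl b =>
    by_cases hbi : b = i
    · subst hbi
      have h := run_aligned hSe_cycle (k - (b : ℕ)) (b : ℕ) (by omega)
      rw [Fin.cast_val_eq_self] at h
      rw [h, if_pos ⟨hsum, by omega⟩, hsum, inner_smul_right, Fin.natCast_self, ← mul_assoc,
        conj_lam_mul hlam, one_mul, inner_self_eq_norm_sq_to_K, inner_self_eq_norm_sq_to_K,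
        hON.1 (Sum.inl 0), hON.1 (Sum.inl b)]
    · have h0 : @inner ℂ H _ (ξ (Sum.inl i)) (ξ (Sum.inl b)) = 0 :=
        hON.2 (fun h => hbi (by injection h; omega))
      rw [h0]
      rcases run_cycle_start hSe_cycle hSe_branch hSe_cycle_zero hSe_ext hSe_branch_zero hlam
          (k - (i : ℕ)) (i : ℕ) (by omega) b with hv | ⟨_, c, hc, hv⟩ | ⟨c, q', hc, hv⟩
      · rw [hv, inner_zero_right, mul_zero]
      · rw [hv, inner_smul_right]
        have hne : Sum.inl (0 : Fin k) ≠
            (Sum.inl (b + ((k - (i : ℕ) : ℕ) : Fin k)) : Fin k ⊕ BranchIdx G e) := by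
          intro hcon
          injection hcon with hcon
          have hi0 : i + ((k - (i : ℕ) : ℕ) : Fin k) = 0 := by
            have : ((i : ℕ) : Fin k) + ((k - (i : ℕ) : ℕ) : Fin k) = (((i : ℕ) + (k - (i : ℕ)) : ℕ) : Fin k) := by
              push_cast; ring
            rw [Fin.cast_val_eq_self] at this
            rw [this, hsum, Fin.natCast_self]
          have : b + ((k - (i : ℕ) : ℕ) : Fin k) = i + ((k - (i : ℕ) : ℕ) : Fin k) := by
            rw [← hcon, hi0]
          exact hbi (add_right_cancel this)
        rw [hON.2 hne, mul_zero, mul_zero]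
      · rw [hv, inner_smul_right, hON.2 (by simp : Sum.inl (0 : Fin k) ≠ Sum.inr q'),
          mul_zero, mul_zero]
  | inr q =>
    have h0 : @inner ℂ H _ (ξ (Sum.inl i)) (ξ (Sum.inr q)) = 0 := hON.2 (by simp)
    rw [h0]
    rcases run_branch hSe_ext hSe_branch_zero (k - (i : ℕ)) (i : ℕ) (by omega) q
        with hv | ⟨q', hv, _⟩
    · rw [hv, inner_zero_right, mul_zero]
    · rw [hv, hON.2 (by simp : Sum.inl (0 : Fin k) ≠ Sum.inr q'), mul_zero]

include hlam hSe_cycle hSe_branch hSe_cycle_zero hSe_ext hSe_branch_zero in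
lemma Bop_inner_all (hON : Orthonormal ℂ ξ)
    (htot : (Submodule.span ℂ (Set.range ξ)).topologicalClosure = ⊤) (i : Fin k) (x : H) :
    @inner ℂ H _ (ξ (Sum.inl 0))
        (((starRingEnd ℂ) lam • Qop S e (i : ℕ) (k - (i : ℕ))) x) =
      @inner ℂ H _ (ξ (Sum.inl i)) x := by
  have hdense : Dense ((Submodule.span ℂ (Set.range ξ) : Submodule ℂ H) : Set H) :=
    Submodule.dense_iff_topologicalClosure_eq_top.mpr htot
  have hfg : (innerSL ℂ (ξ (Sum.inl 0))).comp
      ((starRingEnd ℂ) lam • Qop S e (i : ℕ) (k - (i : ℕ))) = innerSL ℂ (ξ (Sum.inl i)) := by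
    apply ContinuousLinearMap.ext_on hdense
    rintro z ⟨b, rfl⟩
    simpa [inner_smul_right] using
      Bop_inner hSe_cycle hSe_branch hSe_cycle_zero hSe_ext hSe_branch_zero hlam hON i b
  have := DFunLike.congr_fun hfg x
  simpa [inner_smul_right] using this
end Main
end PortCast
set_option synthInstance.maxHeartbeats 1000000 in
/-- Let `w = e_k ⋯ e_1` be a primitive cycle in `G`, `λ ∈ 𝕋`,
and let `S = S_{w,λ}` be the cycle-type atomic CK family on
`H_w = ℂᵏ ⊕ K_w`, with cycle basis `ξ (inl 1), …, ξ (inl k)` and `K_w` basis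
`ξ (inr (j,f,μ))`, acting by `S_{e_j} ξ_j = ξ_{j+1}` (`j < k`),
`S_{e_k} ξ_k = λ ξ_1`, `S_f ξ_j = ξ_{(j,f,∅)}` for `f ≠ e_j` with `s(f) = s(e_j)`,
and `S_g ξ_{(j,f,μ)} = ξ_{(j,f,gμ)}` when composable (all other actions being `0`).
Then the WOT-limit of `(λ̄ S_w)ⁿ` is the rank-one projection `ξ₁ξ₁*`, and
consequently the generated free semigroupoid algebra (the WOT closure of the
algebra generated by the family) contains all the matrix units `ξ_j ξ_i*`. -/
theorem stmt19 (G : DirectedGraph) {H : Type} [NormedAddCommGroup H]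
    [InnerProductSpace ℂ H] [CompleteSpace H]
    (k : ℕ) [NeZero k] (e : Fin k → G.E)
    (hchain : ∀ j : Fin k, G.src (e (j + 1)) = G.rng (e j))
    (hprim : ∀ p : ℕ, 0 < p → p < k → p ∣ k →
      ¬ ∀ j : Fin k, e (j + Fin.ofNat k p) = e j)
    (lam : ℂ) (hlam : ‖lam‖ = 1)
    (ξ : Fin k ⊕ BranchIdx G e → H) (hON : Orthonormal ℂ ξ)
    (htot : (Submodule.span ℂ (Set.range ξ)).topologicalClosure = ⊤)
    (S : TCKFamily G H)
    (hSe_cycle : ∀ j : Fin k, S.Se (e j) (ξ (Sum.inl j)) =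
      (if (j : ℕ) + 1 = k then lam else 1) • ξ (Sum.inl (j + 1)))
    (hSe_branch : ∀ (g : G.E) (j : Fin k), G.src g = G.src (e j) → g ≠ e j →
      ∀ q : BranchIdx G e, q.1 = (j, g, ([] : List G.E)) →
        S.Se g (ξ (Sum.inl j)) = ξ (Sum.inr q))
    (hSe_cycle_zero : ∀ (g : G.E) (j : Fin k), G.src g ≠ G.src (e j) →
      S.Se g (ξ (Sum.inl j)) = 0)
    (hSe_ext : ∀ (g : G.E) (q q' : BranchIdx G e),
      G.RngIs (G.rng q.1.2.1) q.1.2.2 (G.src g) →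
      q'.1 = (q.1.1, q.1.2.1, g :: q.1.2.2) →
        S.Se g (ξ (Sum.inr q)) = ξ (Sum.inr q'))
    (hSe_branch_zero : ∀ (g : G.E) (q : BranchIdx G e),
      ¬ G.RngIs (G.rng q.1.2.1) q.1.2.2 (G.src g) → S.Se g (ξ (Sum.inr q)) = 0)
    (hSv_cycle : ∀ (v : G.V) (j : Fin k),
      (v = G.src (e j) → S.Sv v (ξ (Sum.inl j)) = ξ (Sum.inl j)) ∧
      (v ≠ G.src (e j) → S.Sv v (ξ (Sum.inl j)) = 0))
    (hSv_branch : ∀ (v : G.V) (q : BranchIdx G e),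
      (G.RngIs (G.rng q.1.2.1) q.1.2.2 v → S.Sv v (ξ (Sum.inr q)) = ξ (Sum.inr q)) ∧
      (¬ G.RngIs (G.rng q.1.2.1) q.1.2.2 v → S.Sv v (ξ (Sum.inr q)) = 0)) :
    (∀ x y : H, Filter.Tendsto
      (fun m : ℕ => @inner ℂ H _ y
        ((((starRingEnd ℂ) lam • ((List.ofFn e).reverse.map S.Se).prod) ^ m) x))
      Filter.atTop
      (nhds ((@inner ℂ H _ (ξ (Sum.inl 0)) x) * (@inner ℂ H _ y (ξ (Sum.inl 0)))))) ∧
    (∀ i j : Fin k,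
      (ContinuousLinearMap.smulRight (innerSL ℂ (ξ (Sum.inl i))) (ξ (Sum.inl j))) ∈
        wotClosure (((Algebra.adjoin ℂ
          ({T : H →L[ℂ] H | ∃ v, T = S.Sv v} ∪ {T : H →L[ℂ] H | ∃ g, T = S.Se g}))
            : Subalgebra ℂ (H →L[ℂ] H)) : Set (H →L[ℂ] H))) := by
  constructor
  · intro x y
    exact tendsto_main hSe_cycle hSe_branch hSe_cycle_zero hSe_ext hSe_branch_zero hlam hprim
      hON htot x y
  · intro i j
    intro F ε hε
    set AA := Qop S e 0 (j : ℕ) with hAA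
    set BB := (starRingEnd ℂ) lam • Qop S e (i : ℕ) (k - (i : ℕ)) with hBB
    set TT := Tw S e lam with hTT
    have hQmem : ∀ a t : ℕ, Qop S e a t ∈ Algebra.adjoin ℂ
        ({T : H →L[ℂ] H | ∃ v, T = S.Sv v} ∪ {T : H →L[ℂ] H | ∃ g, T = S.Se g}) := by
      intro a t
      apply list_prod_mem
      intro x hx
      rw [List.mem_map] at hx
      obtain ⟨g, _, rfl⟩ := hx
      exact Algebra.subset_adjoin (Or.inr ⟨g, rfl⟩)
    have hTmem : TT ∈ Algebra.adjoin ℂ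
        ({T : H →L[ℂ] H | ∃ v, T = S.Sv v} ∪ {T : H →L[ℂ] H | ∃ g, T = S.Se g}) := by
      rw [hTT, Tw_eq]
      exact Subalgebra.smul_mem _ (hQmem 0 k) _
    have hBmem : BB ∈ Algebra.adjoin ℂ
        ({T : H →L[ℂ] H | ∃ v, T = S.Sv v} ∪ {T : H →L[ℂ] H | ∃ g, T = S.Se g}) :=
      Subalgebra.smul_mem _ (hQmem _ _) _
    have hEv : ∀ p : H × H, Filter.Tendsto
        (fun m : ℕ => @inner ℂ H _ ((AA * TT ^ m * BB) p.1) p.2) Filter.atTop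
        (nhds (@inner ℂ H _
          ((ContinuousLinearMap.smulRight (innerSL ℂ (ξ (Sum.inl i))) (ξ (Sum.inl j))) p.1)
          p.2)) := by
      rintro ⟨x, y⟩
      have h1 : ∀ m : ℕ, @inner ℂ H _ ((AA * TT ^ m * BB) x) y =
          star (@inner ℂ H _ ((ContinuousLinearMap.adjoint AA) y) ((TT ^ m) (BB x))) := by
        intro m
        rw [← starRingEnd_apply, ← inner_conj_symm]
        congr 1
        rw [ContinuousLinearMap.adjoint_inner_left]
        rfl
      simp only [h1]
      have h2 := (tendsto_main hSe_cycle hSe_branch hSe_cycle_zero hSe_ext hSe_branch_zero hlam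
        hprim hON htot (BB x) ((ContinuousLinearMap.adjoint AA) y)).star
      convert h2 using 2
      rw [star_mul', ← starRingEnd_apply, ← starRingEnd_apply, inner_conj_symm]
      have hB : @inner ℂ H _ (ξ (Sum.inl 0)) (BB x) = @inner ℂ H _ (ξ (Sum.inl i)) x :=
        Bop_inner_all hSe_cycle hSe_branch hSe_cycle_zero hSe_ext hSe_branch_zero hlam
          hON htot i x
      have hAm : @inner ℂ H _ ((ContinuousLinearMap.adjoint AA) y) (ξ (Sum.inl 0)) =
          @inner ℂ H _ y (ξ (Sum.inl j)) := by
        rw [ContinuousLinearMap.adjoint_inner_left, hAA, Aop_xi0 hSe_cycle]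
      rw [← inner_conj_symm (BB x) (ξ (Sum.inl 0)), hB, hAm, inner_conj_symm,
        ContinuousLinearMap.smulRight_apply, innerSL_apply_apply, inner_smul_left,
        inner_conj_symm x (ξ (Sum.inl i)), ← inner_conj_symm (ξ (Sum.inl j)) y]
    have hev2 : ∀ p ∈ F, ∀ᶠ m : ℕ in Filter.atTop,
        ‖@inner ℂ H _
          (((ContinuousLinearMap.smulRight (innerSL ℂ (ξ (Sum.inl i))) (ξ (Sum.inl j))) -
            (AA * TT ^ m * BB)) p.1) p.2‖ < ε := by
      intro p _
      have h6 := hEv p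
      rw [Metric.tendsto_atTop] at h6
      obtain ⟨N, hN⟩ := h6 ε hε
      rw [Filter.eventually_atTop]
      refine ⟨N, fun m hmN => ?_⟩
      have h5 := hN m hmN
      rw [dist_eq_norm] at h5
      rw [ContinuousLinearMap.sub_apply, inner_sub_left, norm_sub_rev]
      exact h5
    obtain ⟨m, hm⟩ := ((Finset.eventually_all F).mpr hev2).exists
    exact ⟨AA * TT ^ m * BB,
      mul_mem (mul_mem (hQmem 0 (j : ℕ)) (pow_mem hTmem m)) hBmem, hm⟩
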